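/- With the setup of the bimodule W = ⊕_{t∈G} Z_t, Z_t = e_A · Z · β_t(e_B): the left C-valued and right D-valued inner products on W are compatible (⟨z, y⟩_C ◇ w = z ◇ ⟨y, w⟩_D for homogeneous z, y, w), and for all t, s ∈ G one has ⟨Z_t, Z_s⟩_C = Y_{α_{ts⁻¹}^A} = e_A C₁ α_{ts⁻¹}^A(e_A) and ⟨Z_t, Z_s⟩_D = Y_{β_{t⁻¹s}} = e_B D₁ β_{t⁻¹s}(e_B). Consequently Z = {Z_t}_{t∈G} is an A₁-B₁^f-equivalence bundle over G, where A₁ = {e_A C₁ α_t^A(e_A)}_{t∈G} and B₁^f = {e_B D₁ β_t(e_B)}_{t∈G}. -/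
import Mathlib


noncomputable section

open scoped BigOperators

/-- The data and axioms of a Hilbert `C`-`D`-bimodule in the sense of
Brown–Mingo–Shen: a bimodule over the C*-algebras `C` and `D` carrying a
left `C`-valued and a right `D`-valued inner product, compatible with the
module actions and satisfying the associativity relation
`⟨x, y⟩_C • z = x • ⟨y, z⟩_D`. -/
structure HilbertBimod (C : Type*) (D : Type*) (Y : Type*)
    [NormedRing C] [StarRing C] [NormedRing D] [StarRing D]
    [NormedAddCommGroup Y] where
  lsmul : C → Y → Y
  rsmul : Y → D → Y
  linner : Y → Y → C
  rinner : Y → Y → D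
  lsmul_add : ∀ c x y, lsmul c (x + y) = lsmul c x + lsmul c y
  add_lsmul : ∀ c c' x, lsmul (c + c') x = lsmul c x + lsmul c' x
  mul_lsmul : ∀ c c' x, lsmul (c * c') x = lsmul c (lsmul c' x)
  one_lsmul : ∀ x, lsmul 1 x = x
  rsmul_add : ∀ x y d, rsmul (x + y) d = rsmul x d + rsmul y d
  add_rsmul : ∀ x d d', rsmul x (d + d') = rsmul x d + rsmul x d'
  rsmul_mul : ∀ x d d', rsmul x (d * d') = rsmul (rsmul x d) d'
  rsmul_one : ∀ x, rsmul x 1 = x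
  lsmul_rsmul : ∀ c x d, rsmul (lsmul c x) d = lsmul c (rsmul x d)
  linner_add_left : ∀ x y z, linner (x + y) z = linner x z + linner y z
  linner_add_right : ∀ x y z, linner x (y + z) = linner x y + linner x z
  linner_lsmul_left : ∀ c x y, linner (lsmul c x) y = c * linner x y
  linner_star : ∀ x y, star (linner x y) = linner y x
  rinner_add_left : ∀ x y z, rinner (x + y) z = rinner x z + rinner y z
  rinner_add_right : ∀ x y z, rinner x (y + z) = rinner x y + rinner x z
  rinner_rsmul_right : ∀ x y d, rinner x (rsmul y d) = rinner x y * d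
  rinner_star : ∀ x y, star (rinner x y) = rinner y x
  inner_assoc : ∀ x y z, lsmul (linner x y) z = rsmul x (rinner y z)
  norm_linner_self : ∀ x, ‖linner x x‖ = ‖x‖ ^ 2
  norm_rinner_self : ∀ x, ‖rinner x x‖ = ‖x‖ ^ 2

/-- Fullness of the left inner product: the closed linear span of the left
inner products is all of `C`. -/
def HilbertBimod.LFull {C D Y : Type*} [NormedRing C] [StarRing C] [NormedAlgebra ℂ C]
    [NormedRing D] [StarRing D] [NormedAddCommGroup Y]
    (E : HilbertBimod C D Y) : Prop :=
  (Submodule.span ℂ {c : C | ∃ x y : Y, c = E.linner x y}).topologicalClosure = ⊤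

/-- Fullness of the right inner product. -/
def HilbertBimod.RFull {C D Y : Type*} [NormedRing C] [StarRing C]
    [NormedRing D] [StarRing D] [NormedAlgebra ℂ D] [NormedAddCommGroup Y]
    (E : HilbertBimod C D Y) : Prop :=
  (Submodule.span ℂ {d : D | ∃ x y : Y, d = E.rinner x y}).topologicalClosure = ⊤

section TwistedBimodule

variable {G : Type*} [Group G] {C₁ D₁ Z : Type*}
  [NormedRing C₁] [StarRing C₁] [NormedAlgebra ℂ C₁]
  [NormedRing D₁] [StarRing D₁] [NormedAlgebra ℂ D₁]
  [NormedAddCommGroup Z]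

/-- The element `e_A · z · β_t(e_B)` of the fiber `Z_t = e_A · Z · β_t(e_B)`. -/
def Zel (E : HilbertBimod C₁ D₁ Z) (eA : C₁) (eB : D₁)
    (β : G → D₁ ≃⋆ₐ[ℂ] D₁) (t : G) (z : Z) : Z :=
  E.lsmul eA (E.rsmul z (β t eB))

/-- The left action `c ◇ p = c · λ_t(p)` of a degree-`t` element `c` of
`C = ⊕_t e_A C₁ α_t(e_A)` on `W = ⊕_t Z_t`. -/
def Lact (E : HilbertBimod C₁ D₁ Z) (lam : G → Z → Z) (t : G) (c : C₁) (p : Z) : Z :=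
  E.lsmul c (lam t p)

/-- The right action `p ◇ d = p · β_t(d)` of `d ∈ D = ⊕_s e_B D₁ β_s(e_B)` on a
degree-`t` element `p ∈ Z_t` of `W = ⊕_t Z_t`. -/
def Ract (E : HilbertBimod C₁ D₁ Z) (β : G → D₁ ≃⋆ₐ[ℂ] D₁) (t : G) (p : Z) (d : D₁) : Z :=
  E.rsmul p (β t d)

/-- The `C`-valued inner product `⟨p , q⟩_C = ⟨p , λ_{ts⁻¹}(q)⟩_{C₁}` of
`p ∈ Z_t` and `q ∈ Z_s`. -/
def Lin (E : HilbertBimod C₁ D₁ Z) (lam : G → Z → Z) (t s : G) (p q : Z) : C₁ :=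
  E.linner p (lam (t * s⁻¹) q)

/-- The `D`-valued inner product `⟨p , q⟩_D = β_{t⁻¹}(⟨p , q⟩_{D₁})` of
`p ∈ Z_t` and `q ∈ Z_s`. -/
def Rin (E : HilbertBimod C₁ D₁ Z) (β : G → D₁ ≃⋆ₐ[ℂ] D₁) (t : G) (p q : Z) : D₁ :=
  β t⁻¹ (E.rinner p q)

end TwistedBimodule

section AuxLemmas

variable {C D Y : Type*} [NormedRing C] [StarRing C] [NormedRing D] [StarRing D]
  [NormedAddCommGroup Y] (E : HilbertBimod C D Y)

/-- The left inner product is conjugate-linear-ish in the second variable: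
`⟨x, c·y⟩_C = ⟨x, y⟩_C (star c)`. -/
lemma lin_lsmul_right (x y : Y) (c : C) :
    E.linner x (E.lsmul c y) = E.linner x y * star c := by
  calc E.linner x (E.lsmul c y) = star (star (E.linner x (E.lsmul c y))) := (star_star _).symm
    _ = star (E.linner (E.lsmul c y) x) := by rw [E.linner_star]
    _ = star (c * E.linner y x) := by rw [E.linner_lsmul_left]
    _ = star (E.linner y x) * star c := by rw [star_mul]
    _ = E.linner x y * star c := by rw [E.linner_star]

/-- `⟨x·d, y⟩_D = (star d) ⟨x, y⟩_D`. -/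
lemma rin_rsmul_left (x y : Y) (d : D) :
    E.rinner (E.rsmul x d) y = star d * E.rinner x y := by
  calc E.rinner (E.rsmul x d) y = star (star (E.rinner (E.rsmul x d) y)) := (star_star _).symm
    _ = star (E.rinner y (E.rsmul x d)) := by rw [E.rinner_star]
    _ = star (E.rinner y x * d) := by rw [E.rinner_rsmul_right]
    _ = star d * star (E.rinner y x) := by rw [star_mul]
    _ = star d * E.rinner x y := by rw [E.rinner_star]

lemma lsmul_sum {ι : Type*} (s : Finset ι) (c : C) (f : ι → Y) :
    E.lsmul c (∑ i ∈ s, f i) = ∑ i ∈ s, E.lsmul c (f i) :=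
  map_sum (AddMonoidHom.mk' (E.lsmul c) (E.lsmul_add c)) f s

lemma sum_lsmul {ι : Type*} (s : Finset ι) (f : ι → C) (x : Y) :
    E.lsmul (∑ i ∈ s, f i) x = ∑ i ∈ s, E.lsmul (f i) x :=
  map_sum (AddMonoidHom.mk' (fun c => E.lsmul c x) (fun a b => E.add_lsmul a b x)) f s

lemma rsmul_sum {ι : Type*} (s : Finset ι) (x : Y) (f : ι → D) :
    E.rsmul x (∑ i ∈ s, f i) = ∑ i ∈ s, E.rsmul x (f i) :=
  map_sum (AddMonoidHom.mk' (E.rsmul x) (E.add_rsmul x)) f s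

lemma linner_sum_right {ι : Type*} (s : Finset ι) (x : Y) (f : ι → Y) :
    E.linner x (∑ i ∈ s, f i) = ∑ i ∈ s, E.linner x (f i) :=
  map_sum (AddMonoidHom.mk' (E.linner x) (E.linner_add_right x)) f s

lemma rinner_sum_right {ι : Type*} (s : Finset ι) (x : Y) (f : ι → Y) :
    E.rinner x (∑ i ∈ s, f i) = ∑ i ∈ s, E.rinner x (f i) :=
  map_sum (AddMonoidHom.mk' (E.rinner x) (E.rinner_add_right x)) f s

/-- Nondegeneracy of the left action, given a family with `Σ ⟨z_i, z_i⟩_C = 1`. -/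
lemma lnondeg {k : ℕ} (zs : Fin k → Y) (hzs : ∑ i, E.linner (zs i) (zs i) = 1)
    {c c' : C} (h : ∀ v, E.lsmul c v = E.lsmul c' v) : c = c' := by
  have hc : ∀ b : C, ∑ i, E.linner (E.lsmul b (zs i)) (zs i) = b := by
    intro b
    simp only [E.linner_lsmul_left]
    rw [← Finset.mul_sum, hzs, mul_one]
  calc c = ∑ i, E.linner (E.lsmul c (zs i)) (zs i) := (hc c).symm
    _ = ∑ i, E.linner (E.lsmul c' (zs i)) (zs i) := by simp only [h]
    _ = c' := hc c'

/-- Nondegeneracy of the right action, given a family with `Σ ⟨w_i, w_i⟩_D = 1`. -/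
lemma rnondeg {k : ℕ} (ws : Fin k → Y) (hws : ∑ i, E.rinner (ws i) (ws i) = 1)
    {d d' : D} (h : ∀ v, E.rsmul v d = E.rsmul v d') : d = d' := by
  have hc : ∀ b : D, ∑ i, E.rinner (ws i) (E.rsmul (ws i) b) = b := by
    intro b
    simp only [E.rinner_rsmul_right]
    rw [← Finset.sum_mul, hws, one_mul]
  calc d = ∑ i, E.rinner (ws i) (E.rsmul (ws i) d) := (hc d).symm
    _ = ∑ i, E.rinner (ws i) (E.rsmul (ws i) d') := by simp only [h]
    _ = d' := hc d'

/-- `⟨z·d, y⟩_C = ⟨z, y·(star d)⟩_C`. -/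
lemma lin_rsmul_left {k : ℕ} (zs : Fin k → Y) (hzs : ∑ i, E.linner (zs i) (zs i) = 1)
    (z y : Y) (d : D) :
    E.linner (E.rsmul z d) y = E.linner z (E.rsmul y (star d)) := by
  apply lnondeg E zs hzs
  intro v
  rw [E.inner_assoc, E.inner_assoc, ← E.rsmul_mul]
  congr 1
  rw [← E.rinner_star v (E.rsmul y (star d)), E.rinner_rsmul_right, star_mul, star_star,
    E.rinner_star v y]

/-- `⟨c·x, y⟩_D = ⟨x, (star c)·y⟩_D`. -/
lemma rin_lsmul_left {k : ℕ} (ws : Fin k → Y) (hws : ∑ i, E.rinner (ws i) (ws i) = 1)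
    (x y : Y) (c : C) :
    E.rinner (E.lsmul c x) y = E.rinner x (E.lsmul (star c) y) := by
  apply rnondeg E ws hws
  intro v
  rw [← E.inner_assoc, ← E.inner_assoc, lin_lsmul_right, E.mul_lsmul]

end AuxLemmas

/-- Lemma 4.4 of the paper.
With `Z_t = e_A · Z · β_t(e_B)` and `W = ⊕_{t∈G} Z_t` as above, the left
`C`-valued and right `D`-valued inner products on `W` are compatible,
`⟨z , y⟩_C ◇ w = z ◇ ⟨y , w⟩_D` for homogeneous `z, y, w`, and for all
`t, s ∈ G` one has `⟨Z_t , Z_s⟩_C = Y_{α_{ts⁻¹}} = e_A C₁ α_{ts⁻¹}(e_A)` and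
`⟨Z_t , Z_s⟩_D = Y_{β_{t⁻¹s}} = e_B D₁ β_{t⁻¹s}(e_B)`.  Consequently
`{Z_t}_{t∈G}` is an `𝒜₁`-`ℬ₁^f`-equivalence bundle over `G`, where
`𝒜₁ = {e_A C₁ α_t(e_A)}_{t∈G}` and `ℬ₁^f = {e_B D₁ β_t(e_B)}_{t∈G}` are the
C*-algebraic bundles induced by the actions `α` and `β`. -/
theorem twisted_bundle_is_equivalence_bundle
    {G : Type} [Group G] [Fintype G] [DecidableEq G]
    {C₁ D₁ : Type} [CStarAlgebra C₁] [CStarAlgebra D₁]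
    -- the Jones projections `e_A ∈ C₁`, `e_B ∈ D₁`:
    (eA : C₁) (heA_star : star eA = eA) (heA_idem : eA * eA = eA)
    (eB : D₁) (heB_star : star eB = eB) (heB_idem : eB * eB = eB)
    -- the action `α = α^𝒜` of `G` on `C₁` and the action `β = α^ℬ ∘ f` on `D₁`:
    (α : G → C₁ ≃⋆ₐ[ℂ] C₁)
    (hα_one : ∀ z : C₁, α 1 z = z)
    (hα_mul : ∀ t s : G, ∀ z : C₁, α (t * s) z = α t (α s z))
    (β : G → D₁ ≃⋆ₐ[ℂ] D₁)
    (hβ_one : ∀ z : D₁, β 1 z = z)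
    (hβ_mul : ∀ t s : G, ∀ z : D₁, β (t * s) z = β t (β s z))
    -- the `C₁`-`D₁`-equivalence bimodule `Z`:
    {Z : Type} [NormedAddCommGroup Z] [CompleteSpace Z]
    (E : HilbertBimod C₁ D₁ Z) (hlF : E.LFull) (hrF : E.RFull)
    -- the action `λ` of `G` on `Z` implementing the strong Morita
    -- equivalence of `α` and `β`:
    (lam : G → Z → Z)
    (hlam_add : ∀ t : G, ∀ x y : Z, lam t (x + y) = lam t x + lam t y)
    (hlam_one : ∀ x : Z, lam 1 x = x)
    (hlam_mul : ∀ t s : G, ∀ x : Z, lam (t * s) x = lam t (lam s x))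
    (hlam_lsmul : ∀ t : G, ∀ (c : C₁) (x : Z),
      lam t (E.lsmul c x) = E.lsmul (α t c) (lam t x))
    (hlam_rsmul : ∀ t : G, ∀ (x : Z) (d : D₁),
      lam t (E.rsmul x d) = E.rsmul (lam t x) (β t d))
    (hlam_linner : ∀ t : G, ∀ x y : Z,
      E.linner (lam t x) (lam t y) = α t (E.linner x y))
    (hlam_rinner : ∀ t : G, ∀ x y : Z,
      E.rinner (lam t x) (lam t y) = β t (E.rinner x y))
    -- `Σ_{t∈G} β_t(e_B) = 1` and `Σ_{t∈G} α_t(e_A) = 1`: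
    (hβ_sum : ∑ t : G, β t eB = 1)
    (hα_sum : ∑ t : G, α t eA = 1)
    -- quasi-bases for the conditional expectations `E^A` and `E^B`:
    {kc : ℕ} (cs : Fin kc → C₁) (hcs : ∑ j, cs j * eA * star (cs j) = 1)
    {kd : ℕ} (ds : Fin kd → D₁) (hds : ∑ j, ds j * eB * star (ds j) = 1)
    -- finite families in `Z` with `Σ_i ⟨z_i , z_i⟩_{C₁} = 1` and
    -- `Σ_i ⟨w_i , w_i⟩_{D₁} = 1`:
    {kz : ℕ} (zs : Fin kz → Z) (hzs : ∑ i, E.linner (zs i) (zs i) = 1)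
    {kw : ℕ} (ws : Fin kw → Z) (hws : ∑ i, E.rinner (ws i) (ws i) = 1) :
    -- the two inner products on `W` are compatible:
    (∀ t s r : G, ∀ z y w : Z,
      Lact E lam (t * s⁻¹)
          (Lin E lam t s (Zel E eA eB β t z) (Zel E eA eB β s y)) (Zel E eA eB β r w)
        = Ract E β t (Zel E eA eB β t z)
            (Rin E β s (Zel E eA eB β s y) (Zel E eA eB β r w))) ∧
    -- `⟨Z_t , Z_s⟩_C = e_A C₁ α_{ts⁻¹}(e_A)` …
    (∀ t s : G,
      Submodule.span ℂ
          {c : C₁ | ∃ z w : Z, c = Lin E lam t s (Zel E eA eB β t z) (Zel E eA eB β s w)}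
        = Submodule.span ℂ {c : C₁ | ∃ x : C₁, c = eA * x * α (t * s⁻¹) eA}) ∧
    -- … and `⟨Z_t , Z_s⟩_D = e_B D₁ β_{t⁻¹s}(e_B)`:
    (∀ t s : G,
      Submodule.span ℂ
          {d : D₁ | ∃ z w : Z, d = Rin E β t (Zel E eA eB β t z) (Zel E eA eB β s w)}
        = Submodule.span ℂ {d : D₁ | ∃ y : D₁, d = eB * y * β (t⁻¹ * s) eB}) := by
  refine ⟨?_, ?_, ?_⟩
  · -- compatibility of the two inner products
    intro t s r z y w
    simp only [Lact, Ract, Lin, Rin]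
    rw [E.inner_assoc, hlam_rinner, hβ_mul]
  · -- ⟨Z_t, Z_s⟩_C = e_A C₁ α_{ts⁻¹}(e_A)
    intro t s
    have hstar_d : star (β t eB) = β t eB := by rw [← map_star, heB_star]
    have hd_idem : β t eB * β t eB = β t eB := by rw [← map_mul, heB_idem]
    have genC : ∀ z w : Z,
        Lin E lam t s (Zel E eA eB β t z) (Zel E eA eB β s w)
          = eA * E.linner (E.rsmul z (β t eB)) (E.rsmul (lam (t * s⁻¹) w) (β t eB))
              * α (t * s⁻¹) eA := by
      intro z w
      simp only [Lin, Zel]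
      rw [hlam_lsmul, hlam_rsmul, ← hβ_mul, inv_mul_cancel_right,
        E.linner_lsmul_left, lin_lsmul_right, ← map_star, heA_star]
      exact (mul_assoc _ _ _).symm
    have hsum1 : ∑ j, β t (ds j) * β t eB * star (β t (ds j)) = (1 : D₁) := by
      have h : ∀ j, β t (ds j) * β t eB * star (β t (ds j))
          = β t (ds j * eB * star (ds j)) := by
        intro j; rw [map_mul, map_mul, map_star]
      simp only [h]
      rw [← map_sum, hds, map_one]
    have keyC : ∀ x : C₁,
        (∑ i, ∑ j, Lin E lam t s
            (Zel E eA eB β t (E.rsmul (E.lsmul x (zs i)) (β t (ds j))))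
            (Zel E eA eB β s (lam (t * s⁻¹)⁻¹ (E.rsmul (zs i) (β t (ds j))))))
          = eA * x * α (t * s⁻¹) eA := by
      intro x
      calc (∑ i, ∑ j, Lin E lam t s
              (Zel E eA eB β t (E.rsmul (E.lsmul x (zs i)) (β t (ds j))))
              (Zel E eA eB β s (lam (t * s⁻¹)⁻¹ (E.rsmul (zs i) (β t (ds j))))))
          = ∑ i, ∑ j, eA * E.linner (E.lsmul x (zs i))
              (E.rsmul (zs i) (β t (ds j) * β t eB * star (β t (ds j))))
              * α (t * s⁻¹) eA := by
            refine Finset.sum_congr rfl fun i _ => Finset.sum_congr rfl fun j _ => ?_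
            rw [genC, ← hlam_mul, mul_inv_cancel, hlam_one,
              lin_rsmul_left E zs hzs, ← E.rsmul_mul, hstar_d, hd_idem,
              lin_rsmul_left E zs hzs, ← E.rsmul_mul, ← E.rsmul_mul, ← mul_assoc]
        _ = ∑ i, eA * E.linner (E.lsmul x (zs i)) (zs i) * α (t * s⁻¹) eA := by
            refine Finset.sum_congr rfl fun i _ => ?_
            rw [← Finset.sum_mul, ← Finset.mul_sum, ← linner_sum_right, ← rsmul_sum,
              hsum1, E.rsmul_one]
        _ = eA * x * α (t * s⁻¹) eA := by
            rw [← Finset.sum_mul, ← Finset.mul_sum]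
            congr 2
            simp only [E.linner_lsmul_left]
            rw [← Finset.mul_sum, hzs, mul_one]
    refine le_antisymm (Submodule.span_le.mpr ?_) (Submodule.span_le.mpr ?_)
    · rintro c ⟨z, w, rfl⟩
      exact Submodule.subset_span ⟨_, genC z w⟩
    · rintro c ⟨x, rfl⟩
      rw [← keyC x]
      exact Submodule.sum_mem _ fun i _ => Submodule.sum_mem _ fun j _ =>
        Submodule.subset_span ⟨_, _, rfl⟩
  · -- ⟨Z_t, Z_s⟩_D = e_B D₁ β_{t⁻¹s}(e_B)
    intro t s
    have genD : ∀ z w : Z,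
        Rin E β t (Zel E eA eB β t z) (Zel E eA eB β s w)
          = eB * β t⁻¹ (E.rinner z (E.lsmul eA w)) * β (t⁻¹ * s) eB := by
      intro z w
      simp only [Rin, Zel]
      rw [rin_lsmul_left E ws hws, heA_star, ← E.mul_lsmul, heA_idem,
        rin_rsmul_left, ← E.lsmul_rsmul, E.rinner_rsmul_right,
        ← map_star, heB_star, map_mul, map_mul, ← hβ_mul, inv_mul_cancel, hβ_one,
        ← hβ_mul, ← mul_assoc]
    have keyD : ∀ y : D₁,
        (∑ i, ∑ j, Rin E β t
            (Zel E eA eB β t (E.lsmul (star (cs j)) (ws i)))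
            (Zel E eA eB β s (E.lsmul (star (cs j)) (E.rsmul (ws i) (β t y)))))
          = eB * y * β (t⁻¹ * s) eB := by
      intro y
      calc (∑ i, ∑ j, Rin E β t
              (Zel E eA eB β t (E.lsmul (star (cs j)) (ws i)))
              (Zel E eA eB β s (E.lsmul (star (cs j)) (E.rsmul (ws i) (β t y)))))
          = ∑ i, ∑ j, eB * β t⁻¹ (E.rinner (ws i)
              (E.lsmul (cs j * eA * star (cs j)) (E.rsmul (ws i) (β t y))))
              * β (t⁻¹ * s) eB := by
            refine Finset.sum_congr rfl fun i _ => Finset.sum_congr rfl fun j _ => ?_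
            rw [genD, rin_lsmul_left E ws hws, star_star, ← E.mul_lsmul, ← E.mul_lsmul]
        _ = ∑ i, eB * β t⁻¹ (E.rinner (ws i) (E.rsmul (ws i) (β t y))) * β (t⁻¹ * s) eB := by
            refine Finset.sum_congr rfl fun i _ => ?_
            rw [← Finset.sum_mul, ← Finset.mul_sum, ← map_sum, ← rinner_sum_right,
              ← sum_lsmul, hcs, E.one_lsmul]
        _ = eB * y * β (t⁻¹ * s) eB := by
            rw [← Finset.sum_mul, ← Finset.mul_sum, ← map_sum]
            congr 2
            have h : ∑ i, E.rinner (ws i) (E.rsmul (ws i) (β t y)) = β t y := by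
              simp only [E.rinner_rsmul_right]
              rw [← Finset.sum_mul, hws, one_mul]
            rw [h, ← hβ_mul, inv_mul_cancel, hβ_one]
    refine le_antisymm (Submodule.span_le.mpr ?_) (Submodule.span_le.mpr ?_)
    · rintro d ⟨z, w, rfl⟩
      exact Submodule.subset_span ⟨_, genD z w⟩
    · rintro d ⟨y, rfl⟩
      rw [← keyD y]
      exact Submodule.sum_mem _ fun i _ => Submodule.sum_mem _ fun j _ =>
        Submodule.subset_span ⟨_, _, rfl⟩
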